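/- For all x > 0, ∫_0^∞ t / ((t+1)²(t + e^x)) dt = x e^x/(e^x - 1)² - 1/(e^x - 1). -/

import Mathlib

open MeasureTheory Filter Real Topology

theorem integral_formula (x : ℝ) (hx : 0 < x) :
    ∫ t in Set.Ioi (0 : ℝ), t / ((t + 1) ^ 2 * (t + Real.exp x)) =
      x * Real.exp x / (Real.exp x - 1) ^ 2 - 1 / (Real.exp x - 1) := by
  set a := Real.exp x with ha_def
  have ha : 1 < a := Real.one_lt_exp_iff.mpr hx
  have ha0 : 0 < a := lt_trans one_pos ha
  have ha1 : a - 1 ≠ 0 := by linarith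
  set A : ℝ := a / (a - 1) ^ 2 with hA
  set F : ℝ → ℝ := fun t => A * Real.log (t + 1) - A * Real.log (t + a)
      + ((a - 1) * (t + 1))⁻¹ with hF
  have hderiv : ∀ t ∈ Set.Ici (0 : ℝ), HasDerivAt F (t / ((t + 1) ^ 2 * (t + a))) t := by
    intro t ht
    have ht0 : (0:ℝ) ≤ t := ht
    have h1 : t + 1 ≠ 0 := by positivity
    have h2 : t + a ≠ 0 := by positivity
    have d1 : HasDerivAt (fun t : ℝ => Real.log (t + 1)) (t + 1)⁻¹ t := by
      simpa [Function.comp_def] using (Real.hasDerivAt_log h1).comp t ((hasDerivAt_id t).add_const 1)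
    have d2 : HasDerivAt (fun t : ℝ => Real.log (t + a)) (t + a)⁻¹ t := by
      simpa [Function.comp_def] using (Real.hasDerivAt_log h2).comp t ((hasDerivAt_id t).add_const a)
    have h3 : (a - 1) * (t + 1) ≠ 0 := by
      apply mul_ne_zero ha1 h1
    have d3 : HasDerivAt (fun t : ℝ => ((a - 1) * (t + 1))⁻¹)
        (-(a - 1) / ((a - 1) * (t + 1)) ^ 2) t := by
      have : HasDerivAt (fun t : ℝ => (a - 1) * (t + 1)) (a - 1) t := by
        simpa using ((hasDerivAt_id t).add_const 1).const_mul (a - 1)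
      exact this.inv h3
    have := ((d1.const_mul A).sub (d2.const_mul A)).add d3
    refine this.congr_deriv ?_
    have h4 : ((a - 1) * (t + 1)) ^ 2 ≠ 0 := pow_ne_zero _ h3
    have h5 : (a - 1) ^ 2 ≠ 0 := pow_ne_zero _ ha1
    rw [hA]
    field_simp
    ring
  have hcont : ContinuousWithinAt F (Set.Ici 0) 0 :=
    (hderiv 0 Set.self_mem_Ici).continuousAt.continuousWithinAt
  have hnonneg : ∀ t ∈ Set.Ioi (0 : ℝ), 0 ≤ t / ((t + 1) ^ 2 * (t + a)) := by
    intro t ht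
    have : (0:ℝ) < t := ht
    positivity
  have htend : Tendsto F atTop (𝓝 0) := by
    have h1 : Tendsto (fun t : ℝ => (t + 1) / (t + a)) atTop (𝓝 1) := by
      have hnum : Tendsto (fun t : ℝ => (1 - a) / (t + a)) atTop (𝓝 0) :=
        Tendsto.div_atTop tendsto_const_nhds (tendsto_atTop_add_const_right _ a tendsto_id)
      have : Tendsto (fun t : ℝ => 1 + (1 - a) / (t + a)) atTop (𝓝 (1 + 0)) :=
        tendsto_const_nhds.add hnum
      rw [add_zero] at this
      apply this.congr'
      filter_upwards [eventually_gt_atTop 0] with t ht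
      have h2 : t + a ≠ 0 := by positivity
      field_simp
      ring
    have hlog : Tendsto (fun t : ℝ => A * Real.log (t + 1) - A * Real.log (t + a))
        atTop (𝓝 0) := by
      have : Tendsto (fun t : ℝ => A * Real.log ((t + 1) / (t + a))) atTop (𝓝 (A * 0)) := by
        apply Tendsto.const_mul
        have := (Real.continuousAt_log one_ne_zero).tendsto
        rw [Real.log_one] at this
        exact this.comp h1
      rw [mul_zero] at this
      apply this.congr'
      filter_upwards [eventually_gt_atTop 0] with t ht
      have h1 : t + 1 ≠ 0 := by positivity
      have h2 : t + a ≠ 0 := by positivity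
      rw [Real.log_div h1 h2]; ring
    have hinv : Tendsto (fun t : ℝ => ((a - 1) * (t + 1))⁻¹) atTop (𝓝 0) := by
      apply Tendsto.inv_tendsto_atTop
      exact Tendsto.const_mul_atTop (by linarith) (tendsto_atTop_add_const_right _ 1 tendsto_id)
    simpa only [add_zero] using hlog.add hinv
  have key := integral_Ioi_of_hasDerivAt_of_nonneg' hderiv hnonneg htend
  rw [key]
  have hF0 : F 0 = -A * x + (a - 1)⁻¹ := by
    simp only [hF]
    rw [zero_add, zero_add, Real.log_one, ha_def, Real.log_exp]
    ring_nf
  rw [hF0, hA]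
  field_simp
  ring
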